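/- arXiv:1902.10783 — 4 statements merged into one kernel-verified Lean document; each statement's English description precedes it below -/
import Mathlib

section
/- Let A be a 3×3 real symmetric matrix with all entries positive, with entries a11, a12, a13, a12, a22, a23, a13, a23, a33. Suppose X = diag(x1, x2, x3) is a diagonal matrix with x1, x2, x3 > 0 such that S = X A X is doubly stochastic. Set z = x1². Then the (1,1) entry of S equals a11·z, and z is a root of the quartic polynomial P(z) = C4·z⁴ + C3·z³ + C2·z² + C1·z + C0, where C4 = a11⁴a22²a33² − a11⁴a22a23²a33 − 2a11³a12²a22a33² + a11³a12²a23²a33 + 2a11³a12a13a22a23a33 − 2a11³a13²a22²a33 + a11³a13²a22a23² + a11²a12⁴a33² − 2a11²a12³a13a23a33 + 3a11²a12²a13²a22a33 − a11²a12²a13²a23² − 2a11²a12a13³a22a23 + a11²a13⁴a22² − a11a12⁴a13²a33 + 2a11a12³a13³a23 − a11a12²a13⁴a22; C3 = −4a11³a22²a33² + 4a11³a22a23²a33 + 4a11²a12²a22a33² − 3a11²a12²a23²a33 − 2a11²a12a13a22a23a33 + 4a11²a13²a22²a33 − 3a11²a13²a22a23² − 2a11a12²a13²a22a33 + 2a11a12²a13²a23²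 − a12⁴a13²a33 + 2a12³a13³a23 − a12²a13⁴a22; C2 = 6a11²a22²a33² − 6a11²a22a23²a33 − 2a11a12²a22a33² + 3a11a12²a23²a33 − 2a11a12a13a22a23a33 − 2a11a13²a22²a33 + 3a11a13²a22a23² + 2a12³a13a23a33 − 3a12²a13²a22a33 − a12²a13²a23² + 2a12a13³a22a23; C1 = −4a11a22²a33² + 4a11a22a23²a33 − a12²a23²a33 + 2a12a13a22a23a33 − a13²a22a23²; C0 = a22²a33² − a22a23²a33. -/
open Finset Matrix

set_option maxHeartbeats 2000000 in
theorem sinkhorn_generic_symmetric_3x3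
    (a11 a12 a13 a22 a23 a33 : ℝ)
    (ha11 : 0 < a11) (ha12 : 0 < a12) (ha13 : 0 < a13)
    (ha22 : 0 < a22) (ha23 : 0 < a23) (ha33 : 0 < a33)
    (x1 x2 x3 : ℝ) (hx1 : 0 < x1) (hx2 : 0 < x2) (hx3 : 0 < x3)
    (A : Matrix (Fin 3) (Fin 3) ℝ)
    (hA : A = !![a11, a12, a13; a12, a22, a23; a13, a23, a33])
    (X : Matrix (Fin 3) (Fin 3) ℝ)
    (hX : X = Matrix.diagonal ![x1, x2, x3])
    (S : Matrix (Fin 3) (Fin 3) ℝ)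
    (hS : S = X * A * X)
    (hrow : ∀ i, ∑ j, S i j = 1)
    (hcol : ∀ j, ∑ i, S i j = 1)
    (z : ℝ) (hz : z = x1 ^ 2) :
    S 0 0 = a11 * z ∧
    (a11^4*a22^2*a33^2 - a11^4*a22*a23^2*a33 - 2*a11^3*a12^2*a22*a33^2
      + a11^3*a12^2*a23^2*a33 + 2*a11^3*a12*a13*a22*a23*a33
      - 2*a11^3*a13^2*a22^2*a33 + a11^3*a13^2*a22*a23^2
      + a11^2*a12^4*a33^2 - 2*a11^2*a12^3*a13*a23*a33
      + 3*a11^2*a12^2*a13^2*a22*a33 - a11^2*a12^2*a13^2*a23^2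
      - 2*a11^2*a12*a13^3*a22*a23 + a11^2*a13^4*a22^2
      - a11*a12^4*a13^2*a33 + 2*a11*a12^3*a13^3*a23
      - a11*a12^2*a13^4*a22) * z^4
    + (-4*a11^3*a22^2*a33^2 + 4*a11^3*a22*a23^2*a33
      + 4*a11^2*a12^2*a22*a33^2 - 3*a11^2*a12^2*a23^2*a33
      - 2*a11^2*a12*a13*a22*a23*a33 + 4*a11^2*a13^2*a22^2*a33
      - 3*a11^2*a13^2*a22*a23^2 - 2*a11*a12^2*a13^2*a22*a33
      + 2*a11*a12^2*a13^2*a23^2 - a12^4*a13^2*a33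
      + 2*a12^3*a13^3*a23 - a12^2*a13^4*a22) * z^3
    + (6*a11^2*a22^2*a33^2 - 6*a11^2*a22*a23^2*a33
      - 2*a11*a12^2*a22*a33^2 + 3*a11*a12^2*a23^2*a33
      - 2*a11*a12*a13*a22*a23*a33 - 2*a11*a13^2*a22^2*a33
      + 3*a11*a13^2*a22*a23^2 + 2*a12^3*a13*a23*a33
      - 3*a12^2*a13^2*a22*a33 - a12^2*a13^2*a23^2
      + 2*a12*a13^3*a22*a23) * z^2
    + (-4*a11*a22^2*a33^2 + 4*a11*a22*a23^2*a33 - a12^2*a23^2*a33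
      + 2*a12*a13*a22*a23*a33 - a13^2*a22*a23^2) * z
    + (a22^2*a33^2 - a22*a23^2*a33) = 0 := by
  subst hA hX hS hz
  have he1 := hrow 0
  have he2 := hrow 1
  have he3 := hrow 2
  simp [Matrix.mul_apply, Fin.sum_univ_three, Matrix.diagonal] at he1 he2 he3
  constructor
  · simp [Matrix.mul_apply, Fin.sum_univ_three, Matrix.diagonal]
    ring
  set z : ℝ := x1 ^ 2 with hzdef
  set q : ℝ := x1 * x3 with hq
  have hf : a22*(1 - a11*z - a13*q)^2 + a12^2*z*(1 - a11*z - a13*q)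
      + a12*a23*(1 - a11*z - a13*q)*q - a12^2*z = 0 := by
    rw [hzdef, hq]
    linear_combination (a12^2*x1^2) * he2
      - (a22*((1 - a11*x1^2 - a13*(x1*x3)) + a12*(x1*x2)) + a12^2*x1^2
         + a12*a23*(x1*x3)) * he1
  have hg : a12*a33*q^2 + a12*a13*z*q + a23*(1 - a11*z - a13*q)*q - a12*z = 0 := by
    rw [hzdef, hq]
    linear_combination (a12*x1^2) * he3 - (a23*(x1*x3)) * he1
  have key : a12^2 * ((a11^4*a22^2*a33^2 - a11^4*a22*a23^2*a33 - 2*a11^3*a12^2*a22*a33^2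
      + a11^3*a12^2*a23^2*a33 + 2*a11^3*a12*a13*a22*a23*a33
      - 2*a11^3*a13^2*a22^2*a33 + a11^3*a13^2*a22*a23^2
      + a11^2*a12^4*a33^2 - 2*a11^2*a12^3*a13*a23*a33
      + 3*a11^2*a12^2*a13^2*a22*a33 - a11^2*a12^2*a13^2*a23^2
      - 2*a11^2*a12*a13^3*a22*a23 + a11^2*a13^4*a22^2
      - a11*a12^4*a13^2*a33 + 2*a11*a12^3*a13^3*a23
      - a11*a12^2*a13^4*a22) * z^4
    + (-4*a11^3*a22^2*a33^2 + 4*a11^3*a22*a23^2*a33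
      + 4*a11^2*a12^2*a22*a33^2 - 3*a11^2*a12^2*a23^2*a33
      - 2*a11^2*a12*a13*a22*a23*a33 + 4*a11^2*a13^2*a22^2*a33
      - 3*a11^2*a13^2*a22*a23^2 - 2*a11*a12^2*a13^2*a22*a33
      + 2*a11*a12^2*a13^2*a23^2 - a12^4*a13^2*a33
      + 2*a12^3*a13^3*a23 - a12^2*a13^4*a22) * z^3
    + (6*a11^2*a22^2*a33^2 - 6*a11^2*a22*a23^2*a33
      - 2*a11*a12^2*a22*a33^2 + 3*a11*a12^2*a23^2*a33
      - 2*a11*a12*a13*a22*a23*a33 - 2*a11*a13^2*a22^2*a33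
      + 3*a11*a13^2*a22*a23^2 + 2*a12^3*a13*a23*a33
      - 3*a12^2*a13^2*a22*a33 - a12^2*a13^2*a23^2
      + 2*a12*a13^3*a22*a23) * z^2
    + (-4*a11*a22^2*a33^2 + 4*a11*a22*a23^2*a33 - a12^2*a23^2*a33
      + 2*a12*a13*a22*a23*a33 - a13^2*a22*a23^2) * z
    + (a22^2*a33^2 - a22*a23^2*a33)) = 0 := by
    linear_combination ((a13^3*a22*a23^2 - 3*a12*a13^2*a22*a23*a33 - a12*a13^4*a22*a23*z + a12^2*a13*a23^2*a33 + 2*a12^2*a13*a22*a33^2 + 2*a12^2*a13^3*a23^2*z + a12^2*a13^3*a22*a33*z - a12^3*a23*a33^2 - 3*a12^3*a13^2*a23*a33*z + a12^4*a13*a33^2*z - a11*a13^3*a22*a23^2*z + 3*a11*a12*a13^2*a22*a23*a33*z - a11*a12^2*a13*a23^2*a33*z - 2*a11*a12^2*a13*a22*a33^2*z + a11*a12^3*a23*a33^2*z)*q + (-a12*a13^3*a22*a23*z - a12^2*a23^2*a33 + a12^2*a22*a33^2 - a12^2*a13^2*a23^2*z + 3*a12^2*a13^2*a22*a33*z + a12^2*a13^4*a22*z^2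 - a12^3*a13*a23*a33*z - 2*a12^3*a13^3*a23*z^2 + a12^4*a13^2*a33*z^2 + 2*a11*a12^2*a23^2*a33*z - 2*a11*a12^2*a22*a33^2*z + a11*a12^2*a13^2*a23^2*z^2 - 2*a11*a12^2*a13^2*a22*a33*z^2 + 2*a11*a12^3*a13*a23*a33*z^2 - a11*a12^4*a33^2*z^2 - a11^2*a12^2*a23^2*a33*z^2 + a11^2*a12^2*a22*a33^2*z^2)) * hf
      + ((a13^4*a22^2*a23 - a12*a13^3*a22*a23^2 - 2*a12*a13^3*a22^2*a33 - a12*a13^5*a22^2*z + 3*a12^2*a13^2*a22*a23*a33 + 3*a12^2*a13^4*a22*a23*z - a12^3*a13*a23^2*a33 - 2*a12^3*a13^3*a23^2*z - a12^3*a13^3*a22*a33*z + a12^4*a13^2*a23*a33*z - a11*a13^4*a22^2*a23*z + a11*a12*a13^3*a22*a23^2*z + 2*a11*a12*a13^3*a22^2*a33*z - 3*a11*a12^2*a13^2*a22*a23*a33*z + a11*a12^3*a13*a23^2*a33*z)*q + (-a13^3*a22^2*a23 + 3*a12*a13^2*a22^2*a33 + a12*a13^4*a22^2*z - 3*a12^2*a13*a22*a23*a33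 - 4*a12^2*a13^3*a22*a23*z + a12^3*a23^2*a33 + a12^3*a13^2*a23^2*z + 4*a12^3*a13^2*a22*a33*z + a12^3*a13^4*a22*z^2 - 2*a12^4*a13*a23*a33*z - 2*a12^4*a13^3*a23*z^2 + a12^5*a13^2*a33*z^2 + 2*a11*a13^3*a22^2*a23*z - 6*a11*a12*a13^2*a22^2*a33*z - 2*a11*a12*a13^4*a22^2*z^2 + 6*a11*a12^2*a13*a22*a23*a33*z + 5*a11*a12^2*a13^3*a22*a23*z^2 - 2*a11*a12^3*a23^2*a33*z - a11*a12^3*a13^2*a23^2*z^2 - 3*a11*a12^3*a13^2*a22*a33*z^2 + a11*a12^4*a13*a23*a33*z^2 - a11^2*a13^3*a22^2*a23*z^2 + 3*a11^2*a12*a13^2*a22^2*a33*z^2 - 3*a11^2*a12^2*a13*a22*a23*a33*z^2 + a11^2*a12^3*a23^2*a33*z^2)) * hg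
  have h12 : a12^2 ≠ 0 := pow_ne_zero _ (ne_of_gt ha12)
  have := (mul_eq_zero.mp key).resolve_left h12
  linarith [this]
end

section
/- Let K and L be positive real numbers and let A be the 3×3 real matrix with rows (K, 1, 1), (1, L, 1), (1, 1, 1). Suppose X = diag(x1, x2, x3) is a diagonal matrix with x1, x2, x3 > 0 such that S = X A X is doubly stochastic. Set z = x1². Then the (1,1) entry of S equals K·z, and z satisfies the quartic equation L + (−4LK + 1)·z + (6LK² − 2LK − 3K − 1)·z² − (K − 1)(4LK² − 3K − 1)·z³ + K(K − 1)²(LK − 1)·z⁴ = 0. -/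
open Finset Matrix

theorem sinkhorn_KL_matrix
    (K L : ℝ) (hK : 0 < K) (hL : 0 < L)
    (x1 x2 x3 : ℝ) (hx1 : 0 < x1) (hx2 : 0 < x2) (hx3 : 0 < x3)
    (A : Matrix (Fin 3) (Fin 3) ℝ)
    (hA : A = !![K, 1, 1; 1, L, 1; 1, 1, 1])
    (X : Matrix (Fin 3) (Fin 3) ℝ)
    (hX : X = Matrix.diagonal ![x1, x2, x3])
    (S : Matrix (Fin 3) (Fin 3) ℝ)
    (hS : S = X * A * X)
    (hrow : ∀ i, ∑ j, S i j = 1)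
    (hcol : ∀ j, ∑ i, S i j = 1)
    (z : ℝ) (hz : z = x1 ^ 2) :
    S 0 0 = K * z ∧
    L + (-4*L*K + 1) * z + (6*L*K^2 - 2*L*K - 3*K - 1) * z^2
      - (K - 1) * (4*L*K^2 - 3*K - 1) * z^3
      + K * (K - 1)^2 * (L*K - 1) * z^4 = 0 := by
  subst hA hX hS hz
  have e1 := hrow 0
  have e2 := hrow 1
  have e3 := hrow 2
  simp [Matrix.mul_apply, Fin.sum_univ_three, Matrix.diagonal] at e1 e2 e3
  constructor
  · simp [Matrix.mul_apply, Fin.sum_univ_three, Matrix.diagonal]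
    ring
  · linear_combination (-((1+(1-K)*(x1^2))^2)*((1+(1-K)*(x1^2)) + x1*x2 + x1*x3) - (L-1)*(2*((1+(1-K)*(x1^2))^2 - (x1^2)*(1+(1-K)*(x1^2)) - (x1^2)) + (((1+(1-K)*(x1^2)) + x1*x3)*(x1*K*x1 + x1*x2 + x1*x3 - 1) - (x1^2)*(x3*x1 + x3*x2 + x3*x3 - 1)))*((1+(1-K)*(x1^2)) + x1*x3)) * e1 + ((x1^2)*(1+(1-K)*(x1^2))^2) * e2 + ((x1^2)*(1+(1-K)*(x1^2))^2 + (L-1)*(2*((1+(1-K)*(x1^2))^2 - (x1^2)*(1+(1-K)*(x1^2)) - (x1^2)) + (((1+(1-K)*(x1^2)) + x1*x3)*(x1*K*x1 + x1*x2 + x1*x3 - 1) - (x1^2)*(x3*x1 + x3*x2 + x3*x3 - 1)))*(x1^2)) * e3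
end

section
/- Let K, L, and M be positive real numbers and let A be the 3×3 real matrix with rows (K, 1, 1), (1, L, 1), (1, 1, M). Suppose X = diag(x1, x2, x3) is a diagonal matrix with x1, x2, x3 > 0 such that S = X A X is doubly stochastic. Set z = x1². Then the (1,1) entry of S equals K·z, and z satisfies the quartic equation LM(LM − 1) + (−4KL²M² + 4KML + 2LM − L − M)·z + (6K²L²M² − 6K²LM − 2KML² − 2KLM² − 2KML + 3LK + 3KM − 3LM + 2L + 2M − 1)·z² + (−4K³L²M² + 4K³LM + 4K²L²M + 4K²LM² − 2K²LM − 3K²L − 3K²M − 2KML + 2K − L − M + 2)·z³ + (KM − 1)·K·(LK − 1)·(KML − K − L − M + 2)·z⁴ = 0. -/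
open Finset Matrix

theorem sinkhorn_KLM_matrix
    (K L M : ℝ) (hK : 0 < K) (hL : 0 < L) (hM : 0 < M)
    (x1 x2 x3 : ℝ) (hx1 : 0 < x1) (hx2 : 0 < x2) (hx3 : 0 < x3)
    (A : Matrix (Fin 3) (Fin 3) ℝ)
    (hA : A = !![K, 1, 1; 1, L, 1; 1, 1, M])
    (X : Matrix (Fin 3) (Fin 3) ℝ)
    (hX : X = Matrix.diagonal ![x1, x2, x3])
    (S : Matrix (Fin 3) (Fin 3) ℝ)
    (hS : S = X * A * X)
    (hrow : ∀ i, ∑ j, S i j = 1)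
    (hcol : ∀ j, ∑ i, S i j = 1)
    (z : ℝ) (hz : z = x1 ^ 2) :
    S 0 0 = K * z ∧
    L*M*(L*M - 1)
    + (-4*K*L^2*M^2 + 4*K*M*L + 2*L*M - L - M) * z
    + (6*K^2*L^2*M^2 - 6*K^2*L*M - 2*K*M*L^2 - 2*K*L*M^2 - 2*K*M*L
        + 3*L*K + 3*K*M - 3*L*M + 2*L + 2*M - 1) * z^2
    + (-4*K^3*L^2*M^2 + 4*K^3*L*M + 4*K^2*L^2*M + 4*K^2*L*M^2
        - 2*K^2*L*M - 3*K^2*L - 3*K^2*M - 2*K*M*L + 2*K - L - M + 2) * z^3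
    + (K*M - 1) * K * (L*K - 1) * (K*M*L - K - L - M + 2) * z^4 = 0 := by
  subst hA hX hS hz
  have e1 : K*x1^2 + x1*x2 + x1*x3 = 1 := by
    have h := hrow 0
    simp [Fin.sum_univ_three, Matrix.mul_apply, Matrix.diagonal, Fin.sum_univ_succ] at h
    linear_combination h
  have e2 : x1*x2 + L*x2^2 + x2*x3 = 1 := by
    have h := hrow 1
    simp [Fin.sum_univ_three, Matrix.mul_apply, Matrix.diagonal, Fin.sum_univ_succ] at h
    linear_combination h
  have e3 : x1*x3 + x2*x3 + M*x3^2 = 1 := by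
    have h := hrow 2
    simp [Fin.sum_univ_three, Matrix.mul_apply, Matrix.diagonal, Fin.sum_univ_succ] at h
    linear_combination h
  constructor
  · show (Matrix.diagonal ![x1, x2, x3] * !![K, 1, 1; 1, L, 1; 1, 1, M] * Matrix.diagonal ![x1, x2, x3]) 0 0 = K * x1 ^ 2
    simp [Matrix.mul_apply, Fin.sum_univ_three, Matrix.diagonal]
    ring
  · have key : x1^2 * (L*M*(L*M - 1)
      + (-4*K*L^2*M^2 + 4*K*M*L + 2*L*M - L - M) * x1^2
      + (6*K^2*L^2*M^2 - 6*K^2*L*M - 2*K*M*L^2 - 2*K*L*M^2 - 2*K*M*L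
          + 3*L*K + 3*K*M - 3*L*M + 2*L + 2*M - 1) * (x1^2)^2
      + (-4*K^3*L^2*M^2 + 4*K^3*L*M + 4*K^2*L^2*M + 4*K^2*L*M^2
          - 2*K^2*L*M - 3*K^2*L - 3*K^2*M - 2*K*M*L + 2*K - L - M + 2) * (x1^2)^3
      + (K*M - 1) * K * (L*K - 1) * (K*M*L - K - L - M + 2) * (x1^2)^4) = 0 := by
      linear_combination (K^3*L^2*M^2*x1^8 + (-1)*K^3*L*M*x1^8 + (-1)*K^2*L^2*M^2*x1^7*x2 + (-1)*K^2*L^2*M^2*x1^7*x3 + (-3)*K^2*L^2*M^2*x1^6 + (-2)*K^2*L^2*M*x1^8 + (-2)*K^2*L*M^2*x1^8 + 2*K^2*L*M*x1^8 + K^2*L*M*x1^7*x2 + K^2*L*M*x1^7*x3 + 3*K^2*L*M*x1^6 + K^2*L*x1^8 + K^2*M*x1^8 + 2*K*L^2*M^2*x1^6*x2*x3 + (-2)*K*L^2*M^2*x1^6*x3^2 + 2*K*L^2*M^2*x1^5*x2 + 2*K*L^2*M^2*x1^5*x3 + 3*K*L^2*M^2*x1^4 + 2*K*L^2*M*x1^7*x2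 + (-1)*K*L^2*M*x1^7*x3 + (-3)*K*L^2*M*x1^6*x2*x3 + K*L^2*M*x1^6*x3^2 + 5*K*L^2*M*x1^6 + K*L^2*x1^8 + K*L^2*x1^7*x3 + K*L^2*x1^6*x2*x3 + (-1)*K*L^2*x1^6 + K*L*M^2*x1^7*x2 + 2*K*L*M^2*x1^7*x3 + (-1)*K*L*M^2*x1^6*x2*x3 + 3*K*L*M^2*x1^6*x3^2 + 3*K*L*M^2*x1^6 + 3*K*L*M*x1^8 + (-2)*K*L*M*x1^7*x2 + K*L*M*x1^7*x3 + K*L*M*x1^6*x2*x3 + (-1)*K*L*M*x1^6*x3^2 + (-3)*K*L*M*x1^6 + (-2)*K*L*M*x1^5*x2 + (-2)*K*L*M*x1^5*x3 + (-3)*K*L*M*x1^4 + (-2)*K*L*x1^8 + (-1)*K*L*x1^7*x2 + (-1)*K*L*x1^7*x3 + (-2)*K*L*x1^6 + K*M^2*x1^8 + (-1)*K*M^2*x1^6*x3^2 + (-2)*K*M*x1^8 + (-2)*K*M*x1^7*x3 + (-2)*K*M*x1^6 + (-1)*K*x1^8 + (-2)*L^2*M^2*x1^4*x2*x3 + 2*L^2*M^2*x1^4*x3^2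 + (-1)*L^2*M^2*x1^3*x2 + (-1)*L^2*M^2*x1^3*x3 + (-1)*L^2*M^2*x1^2 + (-1)*L^2*M*x1^6*x2*x3 + L^2*M*x1^6*x3^2 + (-3)*L^2*M*x1^5*x2 + 2*L^2*M*x1^5*x3 + 3*L^2*M*x1^4*x2*x3 + (-1)*L^2*M*x1^4*x3^2 + (-3)*L^2*M*x1^4 + (-1)*L^2*x1^7*x2 + L^2*x1^7*x3 + L^2*x1^6*x2*x3 + (-1)*L^2*x1^6 + L^2*x1^5*x2 + (-1)*L^2*x1^5*x3 + (-1)*L^2*x1^4*x2*x3 + L^2*x1^4 + (-1)*L*M^2*x1^6*x2*x3 + L*M^2*x1^6*x3^2 + (-3)*L*M^2*x1^5*x3 + L*M^2*x1^4*x2*x3 + (-3)*L*M^2*x1^4*x3^2 + (-1)*L*M^2*x1^4 + (-1)*L*M*x1^7*x2 + 3*L*M*x1^6*x2*x3 + (-3)*L*M*x1^6*x3^2 + (-4)*L*M*x1^6 + L*M*x1^5*x2 + (-2)*L*M*x1^5*x3 + (-1)*L*M*x1^4*x2*x3 + L*M*x1^4*x3^2 + L*M*x1^4 + L*M*x1^3*x2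 + L*M*x1^3*x3 + L*M*x1^2 + (-1)*L*x1^8 + 2*L*x1^7*x2 + (-3)*L*x1^7*x3 + (-2)*L*x1^6*x2*x3 + 3*L*x1^6 + L*x1^5*x2 + L*x1^5*x3 + L*x1^4 + (-1)*M^2*x1^7*x3 + (-1)*M^2*x1^6*x3^2 + M^2*x1^5*x3 + M^2*x1^4*x3^2 + (-1)*M*x1^8 + M*x1^7*x3 + 2*M*x1^6*x3^2 + M*x1^6 + 2*M*x1^5*x3 + M*x1^4 + 2*x1^8 + 2*x1^7*x3 + x1^6) * e1 + (K^2*L*M^2*x1^8 + (-1)*K^2*M*x1^8 + (-2)*K*L*M^2*x1^7*x3 + (-2)*K*L*M^2*x1^6 + (-2)*K*L*M*x1^8 + 3*K*L*M*x1^7*x3 + (-1)*K*L*x1^7*x3 + (-1)*K*M^2*x1^8 + K*M^2*x1^7*x3 + 2*K*M*x1^8 + (-1)*K*M*x1^7*x3 + 2*K*M*x1^6 + K*x1^8 + 2*L*M^2*x1^5*x3 + L*M^2*x1^4 + L*M*x1^7*x3 + 3*L*M*x1^6 + (-3)*L*M*x1^5*x3 + L*x1^8 + (-1)*L*x1^7*x3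 + (-1)*L*x1^6 + L*x1^5*x3 + M^2*x1^7*x3 + (-1)*M^2*x1^5*x3 + M*x1^8 + (-3)*M*x1^7*x3 + (-1)*M*x1^6 + M*x1^5*x3 + (-1)*M*x1^4 + (-2)*x1^8 + 2*x1^7*x3 + (-1)*x1^6) * e2 + (3*K^2*L^2*M*x1^8 + (-1)*K^2*L^2*x1^8 + (-3)*K^2*L*M*x1^8 + K^2*M*x1^8 + 2*K*L^2*M*x1^7*x3 + (-6)*K*L^2*M*x1^6 + (-2)*K*L^2*x1^8 + (-1)*K*L^2*x1^7*x3 + 2*K*L^2*x1^6 + (-3)*K*L*M*x1^8 + (-3)*K*L*M*x1^7*x3 + 6*K*L*M*x1^6 + 5*K*L*x1^8 + K*L*x1^7*x3 + K*M*x1^8 + K*M*x1^7*x3 + (-2)*K*M*x1^6 + (-1)*K*x1^8 + (-2)*L^2*M*x1^5*x3 + 3*L^2*M*x1^4 + (-1)*L^2*x1^7*x3 + L^2*x1^6 + L^2*x1^5*x3 + (-1)*L^2*x1^4 + (-1)*L*M*x1^7*x3 + 4*L*M*x1^6 + 3*L*M*x1^5*x3 + (-3)*L*M*x1^4 + L*x1^8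 + 3*L*x1^7*x3 + (-4)*L*x1^6 + (-1)*L*x1^5*x3 + M*x1^8 + M*x1^7*x3 + (-2)*M*x1^6 + (-1)*M*x1^5*x3 + M*x1^4 + (-2)*x1^8 + (-2)*x1^7*x3 + x1^6) * e3
    have hx : (x1:ℝ)^2 ≠ 0 := pow_ne_zero 2 (ne_of_gt hx1)
    have := (mul_eq_zero.mp key).resolve_left hx
    linear_combination this
end

section
/- Let r be a positive real number. Let A(r) be the 3×3 real matrix whose (1,1) entry is r(r+1)/2 and all of whose other entries are 1, and let X(r) = √(2/((r+1)(r+2))) · diag(1, (r+1)/2, (r+1)/2). Then X(r) A(r) X(r) equals the matrix S(r) with rows (r/(r+2), 1/(r+2), 1/(r+2)), (1/(r+2), (r+1)/(2(r+2)), (r+1)/(2(r+2))), (1/(r+2), (r+1)/(2(r+2)), (r+1)/(2(r+2))), and S(r) is a symmetric doubly stochastic matrix. -/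
open Finset Matrix

theorem sinkhorn_limit_of_special_matrix
    (r : ℝ) (hr : 0 < r)
    (A : Matrix (Fin 3) (Fin 3) ℝ)
    (hA : A = !![r*(r+1)/2, 1, 1; 1, 1, 1; 1, 1, 1])
    (X : Matrix (Fin 3) (Fin 3) ℝ)
    (hX : X = Real.sqrt (2 / ((r+1)*(r+2))) •
            Matrix.diagonal ![1, (r+1)/2, (r+1)/2])
    (S : Matrix (Fin 3) (Fin 3) ℝ)
    (hS : S = !![r/(r+2), 1/(r+2), 1/(r+2);
                 1/(r+2), (r+1)/(2*(r+2)), (r+1)/(2*(r+2));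
                 1/(r+2), (r+1)/(2*(r+2)), (r+1)/(2*(r+2))]) :
    X * A * X = S ∧
    S.IsSymm ∧
    (∀ i, ∑ j, S i j = 1) ∧
    (∀ j, ∑ i, S i j = 1) := by
  have h1 : (0:ℝ) < r + 1 := by linarith
  have h2 : (0:ℝ) < r + 2 := by linarith
  have hc : Real.sqrt (2 / ((r+1)*(r+2))) * Real.sqrt (2 / ((r+1)*(r+2)))
      = 2 / ((r+1)*(r+2)) := by
    exact Real.mul_self_sqrt (by positivity)
  refine ⟨?_, ?_, ?_, ?_⟩
  · subst hA hX hS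
    generalize hcd : Real.sqrt (2 / ((r+1)*(r+2))) = c at hc ⊢
    have hc' : c * c * ((r+1)*(r+2)) = 2 := by
      rw [hc]; field_simp
    ext i j
    fin_cases i <;> fin_cases j <;>
      · simp [Matrix.mul_apply, Fin.sum_univ_succ, Matrix.diagonal, Matrix.vecHead, Matrix.vecTail]
        field_simp
        nlinarith [hc']
  · subst hS
    ext i j
    fin_cases i <;> fin_cases j <;> simp [Matrix.IsSymm, Matrix.vecHead, Matrix.vecTail]
  · subst hS
    intro i
    fin_cases i <;> simp [Fin.sum_univ_succ, Matrix.vecHead, Matrix.vecTail] <;> field_simp <;> ring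
  · subst hS
    intro j
    fin_cases j <;> simp [Fin.sum_univ_succ, Matrix.vecHead, Matrix.vecTail] <;> field_simp <;> ring
end
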